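/- Assume b ≠ 0 and c ≠ 0. Suppose a tuple (g₁, g₂, h₁, h₂, k₁, k₂) of polynomials in ℂ[λ,∂] satisfies the system S(a,b,c) and moreover g₂(λ,∂) = ∂ + aλ + b + c and h₂ = c. Then the tuple is one of the following: (B1) g₁ = h₁ = k₁ = k₂ = 0; (B2) a = 1, c = b, g₁ = h₁ = d for some nonzero constant d, k₁ = −d²/b, and k₂ = −d. -/
import Mathlib


open MvPolynomial

noncomputable section

/-- Polynomials in `ℂ[λ, ∂]`: variable `0` is `λ`, variable `1` is `∂`. -/
abbrev P2 : Type := MvPolynomial (Fin 2) ℂ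

/-- Polynomials in `ℂ[λ, μ, ∂]`: variable `0` is `λ`, variable `1` is `μ`, variable `2` is `∂`. -/
abbrev P3 : Type := MvPolynomial (Fin 3) ℂ

/-- Substitution: `sb p u v` is `p(u, v)`, the image of `p` under `λ ↦ u`, `∂ ↦ v`. -/
def sb {n : ℕ} (p : P2) (u v : MvPolynomial (Fin n) ℂ) : MvPolynomial (Fin n) ℂ :=
  aeval ![u, v] p

/-- `λ` in `ℂ[λ,μ,∂]`. -/
def lm : P3 := X 0
/-- `μ` in `ℂ[λ,μ,∂]`. -/
def mu : P3 := X 1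
/-- `∂` in `ℂ[λ,μ,∂]`. -/
def pa : P3 := X 2
/-- `λ` in `ℂ[λ,∂]`. -/
def lm' : P2 := X 0
/-- `∂` in `ℂ[λ,∂]`. -/
def pa' : P2 := X 1

/-- The system `S(a,b,c)` of equations (E1)-(E14). -/
def SatS (a b c : ℂ) (g1 g2 h1 h2 k1 k2 : P2) : Prop :=
  -- (E1)
  ((C (a - 1) * lm - mu + C b) * sb h1 (lm + mu) pa =
      sb h1 mu (lm + pa) * (pa + lm + C c) + sb h2 mu (lm + pa) * sb g1 lm pa
        - (pa + mu + lm + C c) * sb h1 mu pa) ∧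
  -- (E2)
  ((C (a - 1) * lm - mu + C b) * sb h2 (lm + mu) pa =
      sb h2 mu (lm + pa) * sb g2 lm pa - (pa + mu + lm + C c) * sb h2 mu pa) ∧
  -- (E3)
  ((lm - mu) * sb g1 (lm + mu) pa =
      sb g1 mu (lm + pa) * (pa + lm + C c) + sb g2 mu (lm + pa) * sb g1 lm pa
        - sb g1 lm (mu + pa) * (pa + mu + C c) - sb g2 lm (mu + pa) * sb g1 mu pa) ∧
  -- (E4)
  ((lm - mu) * sb g2 (lm + mu) pa =
      sb g2 mu (lm + pa) * sb g2 lm pa - sb g2 lm (mu + pa) * sb g2 mu pa) ∧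
  -- (E5)
  ((C (a - 1) * lm - mu + C b) * sb k1 (lm + mu) pa =
      sb k1 mu (lm + pa) * (pa + lm + C c) + sb k2 mu (lm + pa) * sb g1 lm pa
        - sb g1 lm (mu + pa) * sb h1 mu pa - sb g2 lm (mu + pa) * sb k1 mu pa) ∧
  -- (E6)
  ((C (a - 1) * lm - mu + C b) * sb k2 (lm + mu) pa =
      sb k2 mu (lm + pa) * sb g2 lm pa - sb g1 lm (mu + pa) * sb h2 mu pa
        - sb g2 lm (mu + pa) * sb k2 mu pa) ∧
  -- (E7)
  (sb h1 mu (lm + pa) * sb h1 lm pa + sb h2 mu (lm + pa) * sb k1 lm pa =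
      sb h1 lm (mu + pa) * sb h1 mu pa + sb h2 lm (mu + pa) * sb k1 mu pa) ∧
  -- (E8)
  (sb h1 mu (lm + pa) * sb h2 lm pa + sb h2 mu (lm + pa) * sb k2 lm pa =
      sb h1 lm (mu + pa) * sb h2 mu pa + sb h2 lm (mu + pa) * sb k2 mu pa) ∧
  -- (E9)
  (sb k1 mu (lm + pa) * sb h1 lm pa + sb k2 mu (lm + pa) * sb k1 lm pa =
      sb k1 lm (mu + pa) * sb h1 mu pa + sb k2 lm (mu + pa) * sb k1 mu pa) ∧
  -- (E10)
  (sb k1 mu (lm + pa) * sb h2 lm pa + sb k2 mu (lm + pa) * sb k2 lm pa =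
      sb k1 lm (mu + pa) * sb h2 mu pa + sb k2 lm (mu + pa) * sb k2 mu pa) ∧
  -- (E11)
  (g1 = sb h1 (-lm' - pa') pa') ∧
  -- (E12)
  (g2 - sb h2 (-lm' - pa') pa' = pa' + C a * lm' + C b) ∧
  -- (E13)
  (k1 = sb k1 (-lm' - pa') pa') ∧
  -- (E14)
  (k2 = sb k2 (-lm' - pa') pa')

lemma eval_sb {n : ℕ} (p : P2) (u v : MvPolynomial (Fin n) ℂ) (x : Fin n → ℂ) :
    eval x (sb p u v) = eval ![eval x u, eval x v] p := by
  rw [sb, aeval_def, MvPolynomial.algebraMap_eq, ← eval_assoc]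
  have : (⇑(eval x) ∘ ![u, v]) = ![eval x u, eval x v] := by
    funext i; fin_cases i <;> rfl
  rw [this]

lemma qeval (g1 : P2) (d : ℂ) :
    Polynomial.eval d (MvPolynomial.aeval ![(0 : Polynomial ℂ), Polynomial.X] g1)
      = eval ![(0:ℂ), d] g1 := by
  rw [← Polynomial.coe_aeval_eq_eval, ← AlgHom.comp_apply, MvPolynomial.comp_aeval]
  have : (fun i => Polynomial.aeval d (![(0:Polynomial ℂ), Polynomial.X] i)) = ![(0:ℂ), d] := by
    funext i; fin_cases i <;> simp
  rw [this, aeval_def, Algebra.algebraMap_self, eval₂_id]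

lemma vec2 (x : Fin 2 → ℂ) : x = ![x 0, x 1] := by
  funext i; fin_cases i <;> rfl

/-- Lemma 3.3: classification in Case (B) when `b ≠ 0` (and `c ≠ 0`),
i.e. when `g₂ = ∂ + aλ + b + c` and `h₂ = c`. -/
theorem stmt4 (a b c : ℂ) (hb : b ≠ 0) (hc : c ≠ 0) (g1 g2 h1 h2 k1 k2 : P2)
    (hS : SatS a b c g1 g2 h1 h2 k1 k2)
    (hg2 : g2 = pa' + C a * lm' + C (b + c)) (hh2 : h2 = C c) :
    -- (B1)
    (g1 = 0 ∧ h1 = 0 ∧ k1 = 0 ∧ k2 = 0) ∨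
    -- (B2)
    (a = 1 ∧ c = b ∧
      ∃ d : ℂ, d ≠ 0 ∧ g1 = C d ∧ h1 = C d ∧ k1 = C (-(d ^ 2) / b) ∧ k2 = C (-d)) := by

  obtain ⟨e1, e2, e3, e4, e5, e6, e7, e8, e9, e10, e11, e12, e13, e14⟩ := hS
  subst hg2; subst hh2
  have E1s : ∀ l m d : ℂ, ((a-1)*l - m + b) * eval ![l+m,d] h1
      = eval ![m,l+d] h1 * (d+l+c) + c * eval ![l,d] g1 - (d+m+l+c) * eval ![m,d] h1 := by
    intro l m d
    have h := congrArg (eval ![l,m,d]) e1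
    simp only [eval_sb, lm, mu, pa, lm', pa', map_add, map_sub, map_mul, map_neg, eval_X, eval_C,
      Matrix.cons_val_zero, Matrix.cons_val_one, Matrix.head_cons, Matrix.cons_val_two,
      Matrix.tail_cons] at h
    linear_combination h
  have E5s : ∀ l m d : ℂ, ((a-1)*l - m + b) * eval ![l+m,d] k1
      = eval ![m,l+d] k1 * (d+l+c) + eval ![m,l+d] k2 * eval ![l,d] g1
        - eval ![l,m+d] g1 * eval ![m,d] h1 - (m+d+a*l+(b+c)) * eval ![m,d] k1 := by
    intro l m d
    have h := congrArg (eval ![l,m,d]) e5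
    simp only [eval_sb, lm, mu, pa, lm', pa', map_add, map_sub, map_mul, map_neg, eval_X, eval_C,
      Matrix.cons_val_zero, Matrix.cons_val_one, Matrix.head_cons, Matrix.cons_val_two,
      Matrix.tail_cons] at h
    linear_combination h
  have E6s : ∀ l m d : ℂ, ((a-1)*l - m + b) * eval ![l+m,d] k2
      = eval ![m,l+d] k2 * (d + a*l + (b+c)) - eval ![l,m+d] g1 * c
        - (m+d+a*l+(b+c)) * eval ![m,d] k2 := by
    intro l m d
    have h := congrArg (eval ![l,m,d]) e6
    simp only [eval_sb, lm, mu, pa, lm', pa', map_add, map_sub, map_mul, map_neg, eval_X, eval_C,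
      Matrix.cons_val_zero, Matrix.cons_val_one, Matrix.head_cons, Matrix.cons_val_two,
      Matrix.tail_cons] at h
    linear_combination h
  have E11s : ∀ l d : ℂ, eval ![l,d] g1 = eval ![-l-d,d] h1 := by
    intro l d
    have h := congrArg (eval ![l,d]) e11
    simp only [eval_sb, lm', pa', map_add, map_sub, map_mul, map_neg, eval_X, eval_C,
      Matrix.cons_val_zero, Matrix.cons_val_one, Matrix.head_cons] at h
    linear_combination h
  have hH : ∀ m d : ℂ, b * eval ![m,d] h1 = c * eval ![(0:ℂ),d] g1 := by
    intro m d
    have h := E1s 0 m d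
    simp only [zero_add, add_zero] at h
    linear_combination h
  have hG : ∀ l d : ℂ, b * eval ![l,d] g1 = c * eval ![(0:ℂ),d] g1 := by
    intro l d
    rw [E11s l d]
    exact hH (-l-d) d
  by_cases h0 : ∀ y : ℂ, eval ![(0:ℂ),y] g1 = 0
  · left
    have hG0 : ∀ l d : ℂ, eval ![l,d] g1 = 0 := by
      intro l d
      have h := hG l d
      rw [h0 d, mul_zero] at h
      exact (mul_eq_zero.mp h).resolve_left hb
    have hH0 : ∀ m d : ℂ, eval ![m,d] h1 = 0 := by
      intro m d
      have h := hH m d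
      rw [h0 d, mul_zero] at h
      exact (mul_eq_zero.mp h).resolve_left hb
    have hK20 : ∀ m d : ℂ, eval ![m,d] k2 = 0 := by
      intro m d
      have h := E6s 0 m d
      simp only [zero_add, hG0] at h
      have hbK : b * eval ![m,d] k2 = 0 := by linear_combination h
      exact (mul_eq_zero.mp hbK).resolve_left hb
    have hK10 : ∀ m d : ℂ, eval ![m,d] k1 = 0 := by
      intro m d
      have h := E5s 0 m d
      simp only [zero_add, hG0, hH0, hK20] at h
      have hbK : (2*b) * eval ![m,d] k1 = 0 := by linear_combination h
      rcases mul_eq_zero.mp hbK with h' | h'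
      · exact absurd h' (by simpa using hb)
      · exact h'
    refine ⟨?_, ?_, ?_, ?_⟩ <;>
      · apply MvPolynomial.funext
        intro x
        rw [vec2 x]
        simp [hG0, hH0, hK10, hK20]
  · right
    push_neg at h0
    obtain ⟨d0, hd0⟩ := h0
    have hcb : c = b := by
      have h := hG 0 d0
      have h2 : (b - c) * eval ![(0:ℂ),d0] g1 = 0 := by linear_combination h
      have h3 := (mul_eq_zero.mp h2).resolve_right hd0
      linear_combination -h3
    subst hcb
    have hH1 : ∀ m d : ℂ, eval ![m,d] h1 = eval ![(0:ℂ),d] g1 := fun m d =>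
      mul_left_cancel₀ hb (hH m d)
    have hG1 : ∀ l d : ℂ, eval ![l,d] g1 = eval ![(0:ℂ),d] g1 := fun l d =>
      mul_left_cancel₀ hb (hG l d)
    have star : ∀ l d : ℂ, (a*l + d + c) * eval ![(0:ℂ),d] g1
        = eval ![(0:ℂ),l+d] g1 * (l+d+c) := by
      intro l d
      have h := E1s l 0 d
      simp only [add_zero, zero_add, hH1, hG1] at h
      linear_combination h
    have key : ∀ l : ℂ, ((a-1)*l) * eval ![(0:ℂ), -c-l] g1 = 0 := by
      intro l
      linear_combination star l (-c-l)
    set q : Polynomial ℂ := MvPolynomial.aeval ![(0 : Polynomial ℂ), Polynomial.X] g1 with hq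
    have hqev : ∀ y : ℂ, Polynomial.eval y q = eval ![(0:ℂ), y] g1 := by
      intro y; rw [hq]; exact qeval g1 y
    have ha1 : a = 1 := by
      by_contra ha
      have hroot : ∀ x : ℂ, x ≠ -c → q.IsRoot x := by
        intro x hx
        have h := key (-c - x)
        rw [show -c - (-c - x) = x by ring] at h
        have h2 : eval ![(0:ℂ), x] g1 = 0 := by
          rcases mul_eq_zero.mp h with h' | h'
          · rcases mul_eq_zero.mp h' with h'' | h''
            · exact absurd (by linear_combination h'') ha
            · exact absurd (by linear_combination -h'') hx
          · exact h'
        show Polynomial.eval x q = 0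
        rw [hqev x]; exact h2
      have hqz : q = 0 := by
        apply Polynomial.eq_zero_of_infinite_isRoot
        apply Set.Infinite.mono (s := ({-c}ᶜ : Set ℂ))
        · intro x hx
          exact hroot x (Set.mem_compl_singleton_iff.mp hx)
        · exact Set.Finite.infinite_compl (Set.finite_singleton _)
      apply hd0
      rw [← hqev d0, hqz, Polynomial.eval_zero]
    subst ha1
    have hconst : ∀ x : ℂ, x ≠ -c → eval ![(0:ℂ), x] g1 = eval ![(0:ℂ), d0] g1 := by
      intro x hx
      have h := star (x - d0) d0
      rw [show x - d0 + d0 = x by ring] at h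
      have h2 : (x + c) * (eval ![(0:ℂ),x] g1 - eval ![(0:ℂ),d0] g1) = 0 := by
        linear_combination -h
      have h3 := (mul_eq_zero.mp h2).resolve_left (by
        intro h'
        exact hx (by linear_combination h'))
      exact sub_eq_zero.mp h3
    have hall : ∀ y : ℂ, eval ![(0:ℂ), y] g1 = eval ![(0:ℂ), d0] g1 := by
      have hroot : ∀ x : ℂ, x ≠ -c →
          (q - Polynomial.C (eval ![(0:ℂ),d0] g1)).IsRoot x := by
        intro x hx
        show Polynomial.eval x (q - Polynomial.C (eval ![(0:ℂ),d0] g1)) = 0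
        rw [Polynomial.eval_sub, Polynomial.eval_C, hqev x, hconst x hx, sub_self]
      have hqz : q - Polynomial.C (eval ![(0:ℂ),d0] g1) = 0 := by
        apply Polynomial.eq_zero_of_infinite_isRoot
        apply Set.Infinite.mono (s := ({-c}ᶜ : Set ℂ))
        · intro x hx
          exact hroot x (Set.mem_compl_singleton_iff.mp hx)
        · exact Set.Finite.infinite_compl (Set.finite_singleton _)
      intro y
      have h := congrArg (Polynomial.eval y) hqz
      rw [Polynomial.eval_sub, Polynomial.eval_C, Polynomial.eval_zero, hqev y,
        sub_eq_zero] at h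
      exact h
    have hG2 : ∀ l y : ℂ, eval ![l,y] g1 = eval ![(0:ℂ),d0] g1 := fun l y =>
      (hG1 l y).trans (hall y)
    have hH2 : ∀ m y : ℂ, eval ![m,y] h1 = eval ![(0:ℂ),d0] g1 := fun m y =>
      (hH1 m y).trans (hall y)
    have hK2v : ∀ m y : ℂ, eval ![m,y] k2 = -(eval ![(0:ℂ),d0] g1) := by
      intro m y
      have h := E6s 0 m y
      simp only [zero_add, hG2] at h
      have hb2 : c * eval ![m,y] k2 = c * (-(eval ![(0:ℂ),d0] g1)) := by linear_combination h
      exact mul_left_cancel₀ hb hb2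
    have hK1v : ∀ m y : ℂ, eval ![m,y] k1 = -((eval ![(0:ℂ),d0] g1)^2) / c := by
      intro m y
      have h := E5s 0 m y
      simp only [zero_add, hG2, hH2, hK2v] at h
      have hb2 : c * eval ![m,y] k1 = -((eval ![(0:ℂ),d0] g1)^2) := by
        linear_combination h / 2
      rw [eq_div_iff hb]
      linear_combination hb2
    refine ⟨rfl, rfl, eval ![(0:ℂ),d0] g1, hd0, ?_, ?_, ?_, ?_⟩ <;>
      · apply MvPolynomial.funext
        intro x
        rw [vec2 x]
        simp [hG2, hH2, hK1v, hK2v]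


end
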